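/- Let f be convex differentiable with ν-Hölder continuous gradient of constant L_ν, ν ∈ (0,1). For any δ > 0, if L̂ ≥ ((1−ν)/(δ(1+ν)))^{(1−ν)/(1+ν)} · L_ν^{2/(1+ν)}, then f(x) ≤ f(y) + ⟨∇f(y), x − y⟩ + (L̂/2)‖x − y‖² + δ/2 for all x, y. -/

import Mathlib

open RealInnerProductSpace

-- scalar Young-type inequality
lemma scalar_young (ν L δ t : ℝ) (hν0 : 0 < ν) (hν1 : ν < 1) (hL : 0 < L) (hδ : 0 < δ)
    (ht : 0 ≤ t) :
    L / (1 + ν) * t ^ (1 + ν) ≤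
      (((1 - ν) / (δ * (1 + ν))) ^ ((1 - ν) / (1 + ν)) * L ^ (2 / (1 + ν))) / 2 * t ^ 2 + δ / 2 := by
  have h1ν : (0:ℝ) < 1 + ν := by linarith
  set A : ℝ := (1 - ν) / (δ * (1 + ν)) with hAdef
  have hA : 0 < A := div_pos (by linarith) (by positivity)
  set M : ℝ := A ^ ((1 - ν) / (1 + ν)) * L ^ (2 / (1 + ν)) with hMdef
  have hM : 0 < M := by positivity
  set θ : ℝ := (1 + ν) / 2 with hθdef
  set w : ℝ := (1 - ν) / 2 with hwdef
  have hθ : 0 ≤ θ := by positivity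
  have hw : 0 ≤ w := by rw [hwdef]; linarith
  have hsum : θ + w = 1 := by rw [hθdef, hwdef]; ring
  have key := Real.geom_mean_le_arith_mean2_weighted (w₁ := θ) (w₂ := w) (p₁ := M * t ^ 2)
    (p₂ := A⁻¹) hθ hw (by positivity) (le_of_lt (inv_pos.mpr hA)) hsum
  have hMθ : M ^ θ = A ^ w * L := by
    rw [hMdef, Real.mul_rpow (by positivity) (by positivity),
      ← Real.rpow_mul hA.le, ← Real.rpow_mul hL.le]
    have e1 : (1 - ν) / (1 + ν) * θ = w := by
      rw [hθdef, hwdef]; field_simp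
    have e2 : 2 / (1 + ν) * θ = 1 := by
      rw [hθdef]; field_simp
    rw [e1, e2, Real.rpow_one]
  have ht2θ : ((t : ℝ) ^ 2) ^ θ = t ^ (1 + ν) := by
    rw [← Real.rpow_natCast t 2, ← Real.rpow_mul ht]
    congr 1
    rw [hθdef]; push_cast; ring
  have hMT : (M * t ^ 2) ^ θ * (A⁻¹) ^ w = L * t ^ (1 + ν) := by
    rw [Real.mul_rpow hM.le (by positivity), hMθ, ht2θ, Real.inv_rpow hA.le]
    have : (0:ℝ) < A ^ w := Real.rpow_pos_of_pos hA w
    field_simp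
  rw [hMT] at key
  have hAinv : w * A⁻¹ = δ * (1 + ν) / 2 := by
    have hne : (1:ℝ) - ν ≠ 0 := by linarith
    rw [hwdef, hAdef, inv_div]
    field_simp
  rw [hAinv] at key
  have hexp : (M / 2 * t ^ 2 + δ / 2) * (1 + ν) = θ * (M * t ^ 2) + δ * (1 + ν) / 2 := by
    rw [hθdef]; ring
  rw [div_mul_eq_mul_div, div_le_iff₀ h1ν, hexp]
  exact key

-- Hölder descent lemma
lemma holder_descent {n : ℕ} (f : EuclideanSpace ℝ (Fin n) → ℝ) (hdiff : Differentiable ℝ f)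
    (ν L : ℝ) (hν0 : 0 < ν) (hL : 0 < L)
    (hhold : ∀ x y, ‖gradient f x - gradient f y‖ ≤ L * ‖x - y‖ ^ ν)
    (x y : EuclideanSpace ℝ (Fin n)) :
    f x ≤ f y + ⟪gradient f y, x - y⟫ + L / (1 + ν) * ‖x - y‖ ^ (1 + ν) := by
  have h1ν : (0:ℝ) < 1 + ν := by linarith
  -- continuity of the gradient
  have hcont : Continuous (gradient f) := by
    rw [Metric.continuous_iff]
    intro b ε hε
    refine ⟨(ε / (2 * L)) ^ (1/ν), Real.rpow_pos_of_pos (by positivity) _, fun a hab => ?_⟩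
    have h1 : dist (gradient f a) (gradient f b) ≤ L * dist a b ^ ν := by
      rw [dist_eq_norm, dist_eq_norm]
      exact hhold a b
    have h2 : dist a b ^ ν < ((ε / (2 * L)) ^ (1/ν)) ^ ν :=
      Real.rpow_lt_rpow dist_nonneg hab hν0
    rw [← Real.rpow_mul (by positivity), one_div_mul_cancel hν0.ne', Real.rpow_one] at h2
    calc dist (gradient f a) (gradient f b) ≤ L * dist a b ^ ν := h1
      _ < L * (ε / (2 * L)) := by exact (mul_lt_mul_iff_right₀ hL).mpr h2
      _ < ε := by
          have hL' : L ≠ 0 := hL.ne'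
          have heq : L * (ε / (2 * L)) = ε / 2 := by field_simp
          rw [heq]; linarith
  set z : ℝ → EuclideanSpace ℝ (Fin n) := fun t => y + t • (x - y) with hz
  set G : ℝ → ℝ := fun t => ⟪gradient f (z t), x - y⟫ with hG
  have hline : ∀ t : ℝ, HasDerivAt z (x - y) t := by
    intro t
    have h := ((hasDerivAt_id t).smul_const (x - y)).const_add y
    rw [one_smul] at h
    exact h
  have hderiv : ∀ t : ℝ, HasDerivAt (fun s => f (z s)) (G t) t := by
    intro t
    have hgr := (hdiff (z t)).hasGradientAt
    have hfd := hgr.hasFDerivAt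
    have := hfd.comp_hasDerivAt t (hline t)
    rw [InnerProductSpace.toDual_apply_apply] at this
    exact this
  have hGcont : Continuous G := by
    apply Continuous.inner
    · exact hcont.comp (by continuity)
    · exact continuous_const
  have hint : IntervalIntegrable G MeasureTheory.volume 0 1 :=
    hGcont.intervalIntegrable 0 1
  have hFTC : ∫ t in (0:ℝ)..1, G t = f (z 1) - f (z 0) :=
    intervalIntegral.integral_eq_sub_of_hasDerivAt (fun t _ => hderiv t) hint
  have hz1 : z 1 = x := by simp [hz]
  have hz0 : z 0 = y := by simp [hz]
  rw [hz1, hz0] at hFTC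
  -- bound the integrand
  have hbound : ∀ t ∈ Set.Icc (0:ℝ) 1,
      G t ≤ ⟪gradient f y, x - y⟫ + L * ‖x - y‖ ^ (1 + ν) * t ^ ν := by
    intro t ht
    have hzt : ‖z t - y‖ = t * ‖x - y‖ := by
      rw [hz]
      simp only [add_sub_cancel_left, norm_smul, Real.norm_eq_abs, abs_of_nonneg ht.1]
    have hh : ‖gradient f (z t) - gradient f y‖ ≤ L * (t * ‖x - y‖) ^ ν := by
      rw [← hzt]; exact hhold (z t) y
    have hinner : G t - ⟪gradient f y, x - y⟫ = ⟪gradient f (z t) - gradient f y, x - y⟫ := by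
      rw [hG]; simp [inner_sub_left]
    have hcs : ⟪gradient f (z t) - gradient f y, x - y⟫ ≤
        ‖gradient f (z t) - gradient f y‖ * ‖x - y‖ := real_inner_le_norm _ _
    have hmul : L * (t * ‖x - y‖) ^ ν * ‖x - y‖ = L * ‖x - y‖ ^ (1 + ν) * t ^ ν := by
      rw [Real.mul_rpow ht.1 (norm_nonneg _), Real.rpow_add' (norm_nonneg _) (by positivity),
        Real.rpow_one]
      ring
    nlinarith [mul_le_mul_of_nonneg_right hh (norm_nonneg (x - y)), hcs,
      hinner]
  have hintb : IntervalIntegrable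
      (fun t => ⟪gradient f y, x - y⟫ + L * ‖x - y‖ ^ (1 + ν) * t ^ ν)
      MeasureTheory.volume 0 1 := by
    apply IntervalIntegrable.add (intervalIntegrable_const)
    exact (intervalIntegral.intervalIntegrable_rpow' (by linarith)).const_mul _
  have hmono : ∫ t in (0:ℝ)..1, G t ≤
      ∫ t in (0:ℝ)..1, (⟪gradient f y, x - y⟫ + L * ‖x - y‖ ^ (1 + ν) * t ^ ν) := by
    apply intervalIntegral.integral_mono_on (by norm_num) hint hintb
    intro t ht
    exact hbound t ht
  have hval : ∫ t in (0:ℝ)..1, (⟪gradient f y, x - y⟫ + L * ‖x - y‖ ^ (1 + ν) * t ^ ν)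
      = ⟪gradient f y, x - y⟫ + L / (1 + ν) * ‖x - y‖ ^ (1 + ν) := by
    rw [intervalIntegral.integral_add intervalIntegrable_const
      ((intervalIntegral.intervalIntegrable_rpow' (by linarith)).const_mul _),
      intervalIntegral.integral_const_mul, integral_rpow (Or.inl (by linarith))]
    rw [Real.zero_rpow (by positivity : ν + 1 ≠ 0), Real.one_rpow]
    simp only [intervalIntegral.integral_const, smul_eq_mul, sub_zero, mul_one]
    rw [add_comm ν 1]
    ring
  rw [hval, hFTC] at hmono
  linarith

/-- Nesterov's smoothing inequality: a function with ν-Hölder continuous gradient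
satisfies an inexact descent inequality with quadratic upper model. -/
theorem holder_inexact_quadratic_upper_bound {n : ℕ} (f : EuclideanSpace ℝ (Fin n) → ℝ)
    (hconv : ConvexOn ℝ Set.univ f) (hdiff : Differentiable ℝ f)
    (ν L δ Lhat : ℝ) (hν0 : 0 < ν) (hν1 : ν < 1) (hL : 0 < L) (hδ : 0 < δ)
    (hhold : ∀ x y, ‖gradient f x - gradient f y‖ ≤ L * ‖x - y‖ ^ ν)
    (hLhat : ((1 - ν) / (δ * (1 + ν))) ^ ((1 - ν) / (1 + ν)) * L ^ (2 / (1 + ν)) ≤ Lhat) :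
    ∀ x y, f x ≤ f y + ⟪gradient f y, x - y⟫ + (Lhat / 2) * ‖x - y‖ ^ 2 + δ / 2 := by
  intro x y
  have h1 := holder_descent f hdiff ν L hν0 hL hhold x y
  have h2 := scalar_young ν L δ ‖x - y‖ hν0 hν1 hL hδ (norm_nonneg _)
  have h3 : (((1 - ν) / (δ * (1 + ν))) ^ ((1 - ν) / (1 + ν)) * L ^ (2 / (1 + ν))) / 2 * ‖x - y‖ ^ 2
      ≤ Lhat / 2 * ‖x - y‖ ^ 2 := by
    apply mul_le_mul_of_nonneg_right _ (by positivity)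
    linarith
  linarith
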